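/- The quantity l(λ,μ) = Σ_{i ∈ I(B)} l_i(λ,μ) is a finite sum (only finitely many l_i(λ,μ) are nonzero), and λ ≥ μ in the diagram order if and only if l_i(λ,μ) ≥ 0 for all i ∈ I(B). -/

import Mathlib

/-- The four labels `∘, ×, ∨, ∧`. -/
inductive Lbl : Type
  | circ | times | vee | wedge
  deriving DecidableEq

/-- A label is trivial if it is `∘` or `×`. -/
def Triv (s : Lbl) : Prop := s = Lbl.circ ∨ s = Lbl.times

/-- One covering move: `d'` is obtained from `d` by swapping a `∨` and a `∧`
so that the `∧` moves to the right. -/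
def Step (d d' : ℕ → Lbl) : Prop :=
  ∃ i j : ℕ, i < j ∧ d i = Lbl.wedge ∧ d j = Lbl.vee ∧
    d' i = Lbl.vee ∧ d' j = Lbl.wedge ∧ ∀ n, n ≠ i → n ≠ j → d' n = d n

/-- The diagram order, generated by the swapping moves. -/
def DiagLe (d d' : ℕ → Lbl) : Prop := Relation.ReflTransGen Step d d'

/-- The set of non-trivial vertices (those labelled `∨` or `∧`). -/
def NonTriv (d : ℕ → Lbl) : Set ℕ := {i | ¬ Triv (d i)}

/-- `I(B)`: the non-trivial vertices, excluding the leftmost one. -/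
noncomputable def IB (d : ℕ → Lbl) : Set ℕ := NonTriv d \ {sInf (NonTriv d)}

/-- `l_i(λ,μ)`. -/
noncomputable def lI (dl dm : ℕ → Lbl) (i : ℕ) : ℤ :=
  ({j | i ≤ j ∧ dl j ≠ dm j ∧ j ∈ IB dl ∧ dl j = Lbl.wedge}.ncard : ℤ) -
  ({j | i ≤ j ∧ dl j ≠ dm j ∧ j ∈ IB dl ∧ dm j = Lbl.wedge}.ncard : ℤ)

namespace ProofAux

def Wd (d : ℕ → Lbl) : Set ℕ := {n | d n = Lbl.wedge}

lemma step_W {d d' : ℕ → Lbl} (h : Step d d') :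
    ∃ i j, i < j ∧ i ∈ Wd d ∧ j ∉ Wd d ∧ Wd d' = insert j (Wd d \ {i}) := by
  obtain ⟨i, j, hij, hdi, hdj, hdi', hdj', hoth⟩ := h
  refine ⟨i, j, hij, hdi, by simp [Wd, hdj], ?_⟩
  ext n
  rcases eq_or_ne n i with rfl | hni
  · simp [Wd, hdi', hij.ne, hdi]
  rcases eq_or_ne n j with rfl | hnj
  · simp [Wd, hdj']
  · simp [Wd, hoth n hni hnj, hni, hnj]

lemma tail_mono (S : Set ℕ) (hS : S.Finite) {i j : ℕ} (hij : i < j)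
    (hi : i ∈ S) (hj : j ∉ S) (k : ℕ) :
    (S ∩ Set.Ici k).ncard ≤ ((insert j (S \ {i})) ∩ Set.Ici k).ncard := by
  refine Set.ncard_le_ncard_of_injOn (fun x => if x = i then j else x) ?_ ?_
    (((hS.sdiff (t := {i})).insert j).inter_of_left _)
  · rintro a ⟨haS, hak⟩
    by_cases hai : a = i
    · subst hai
      simp only [if_pos rfl]
      exact ⟨Set.mem_insert _ _, le_trans hak hij.le⟩
    · simp only [if_neg hai]
      exact ⟨Set.mem_insert_of_mem _ ⟨haS, hai⟩, hak⟩
  · rintro a ⟨haS, -⟩ b ⟨hbS, -⟩ hab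
    by_cases hai : a = i <;> by_cases hbi : b = i
    · rw [hai, hbi]
    · simp only [if_pos hai, if_neg hbi] at hab
      exact absurd (hab ▸ hbS) hj
    · simp only [if_neg hai, if_pos hbi] at hab
      exact absurd (hab ▸ haS) hj
    · simpa [if_neg hai, if_neg hbi] using hab

lemma diagle_tail {d d' : ℕ → Lbl} (h : DiagLe d d') (hfin : (Wd d).Finite) :
    (Wd d').Finite ∧ ∀ k, (Wd d ∩ Set.Ici k).ncard ≤ (Wd d' ∩ Set.Ici k).ncard := by
  induction h with
  | refl => exact ⟨hfin, fun _ => le_rfl⟩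
  | tail hab hbc ih =>
    obtain ⟨hbfin, hb⟩ := ih
    obtain ⟨i, j, hij, hi, hj, hW⟩ := step_W hbc
    refine ⟨by rw [hW]; exact (hbfin.sdiff (t := {i})).insert j, fun k => (hb k).trans ?_⟩
    rw [hW]
    exact tail_mono _ hbfin hij hi hj k

lemma types {dl dm : ℕ → Lbl} (h1 : ∀ n, Triv (dl n) → dm n = dl n)
    (h2 : ∀ n, Triv (dm n) → dl n = dm n) (n : ℕ) (hne : dl n ≠ dm n) :
    (dl n = Lbl.wedge ∧ dm n = Lbl.vee) ∨ (dl n = Lbl.vee ∧ dm n = Lbl.wedge) := by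
  have hl : ¬ Triv (dl n) := fun h => hne (h1 n h).symm
  have hm : ¬ Triv (dm n) := fun h => hne (h2 n h)
  cases hdl : dl n <;> cases hdm : dm n <;> simp_all [Triv]

lemma back_main (dl : ℕ → Lbl) :
    ∀ n (dm : ℕ → Lbl), ({m | dl m ≠ dm m}).ncard = n →
    ({m | dl m ≠ dm m}).Finite →
    (∀ m, dl m ≠ dm m →
      (dl m = Lbl.wedge ∧ dm m = Lbl.vee) ∨ (dl m = Lbl.vee ∧ dm m = Lbl.wedge)) →
    {m | dl m = Lbl.wedge ∧ dm m = Lbl.vee}.ncard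
      = {m | dl m = Lbl.vee ∧ dm m = Lbl.wedge}.ncard →
    (∀ k, ({m | dl m = Lbl.vee ∧ dm m = Lbl.wedge} ∩ Set.Ici k).ncard
      ≤ ({m | dl m = Lbl.wedge ∧ dm m = Lbl.vee} ∩ Set.Ici k).ncard) →
    DiagLe dm dl := by
  intro n
  induction n using Nat.strong_induction_on with
  | _ n IH =>
    intro dm hn hfin hAB hcard htail
    set D := {m | dl m ≠ dm m} with hD
    set A := {m | dl m = Lbl.wedge ∧ dm m = Lbl.vee} with hA
    set Bs := {m | dl m = Lbl.vee ∧ dm m = Lbl.wedge} with hBs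
    have hAD : A ⊆ D := fun x hx => by
      simp only [hA, Set.mem_setOf_eq] at hx
      simp only [hD, Set.mem_setOf_eq, hx.1, hx.2]
      simp
    have hBD : Bs ⊆ D := fun x hx => by
      simp only [hBs, Set.mem_setOf_eq] at hx
      simp only [hD, Set.mem_setOf_eq, hx.1, hx.2]
      simp
    have hAfin : A.Finite := hfin.subset hAD
    have hBfin : Bs.Finite := hfin.subset hBD
    by_cases hDe : D = ∅
    · have : dm = dl := by
        funext x
        by_contra hx
        exact absurd (hDe ▸ (fun h => hx h.symm : x ∈ D)) (Set.notMem_empty x)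
      exact this ▸ Relation.ReflTransGen.refl
    -- D nonempty; get its max j
    have hDne : D.Nonempty := Set.nonempty_iff_ne_empty.mpr hDe
    obtain ⟨j, hjD, hjmax⟩ : ∃ j ∈ D, ∀ x ∈ D, x ≤ j := by
      obtain ⟨j, hj1, hj2⟩ := hfin.exists_maximalFor id D hDne
      exact ⟨j, hj1, fun x hx => le_of_not_gt fun hlt => hlt.not_ge (hj2 hx hlt.le)⟩
    have hjA : j ∈ A := by
      rcases hAB j hjD with h | h
      · exact h
      · exfalso
        have h1 : (Bs ∩ Set.Ici j).ncard ≠ 0 := by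
          have : j ∈ Bs ∩ Set.Ici j := ⟨h, le_refl j⟩
          exact Set.ncard_ne_zero_of_mem this (hBfin.inter_of_left _)
        have h2 : A ∩ Set.Ici j = ∅ := by
          ext x
          simp only [Set.mem_inter_iff, Set.mem_empty_iff_false, iff_false, not_and]
          intro hxA hxj
          have hxj' : x = j := le_antisymm (hjmax x (hAD hxA)) hxj
          rw [hxj'] at hxA
          rw [hxA.2] at h
          exact absurd h.2 (by simp)
        have := htail j
        rw [h2, Set.ncard_empty] at this
        exact h1 (Nat.le_zero.mp this)
    have hBne : Bs.Nonempty := by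
      rw [← Set.ncard_pos hBfin, ← hcard, Set.ncard_pos hAfin]
      exact ⟨j, hjA⟩
    obtain ⟨i, hiB, himax⟩ : ∃ i ∈ Bs, ∀ x ∈ Bs, x ≤ i := by
      obtain ⟨i, hi1, hi2⟩ := hBfin.exists_maximalFor id Bs hBne
      exact ⟨i, hi1, fun x hx => le_of_not_gt fun hlt => hlt.not_ge (hi2 hx hlt.le)⟩
    have hij : i < j := by
      rcases lt_or_eq_of_le (hjmax i (hBD hiB)) with h | h
      · exact h
      · exact absurd (hjA.2.symm.trans (h ▸ hiB).2) (by simp)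
    set dm' : ℕ → Lbl := fun x => if x = i then Lbl.vee else if x = j then Lbl.wedge else dm x
      with hdm'
    have hdm'i : dm' i = Lbl.vee := by simp [hdm']
    have hdm'j : dm' j = Lbl.wedge := by simp [hdm', hij.ne']
    have hdm'oth : ∀ x, x ≠ i → x ≠ j → dm' x = dm x := by
      intro x h1 h2; simp [hdm', h1, h2]
    have hstep : Step dm dm' := ⟨i, j, hij, hiB.2, hjA.2, hdm'i, hdm'j, hdm'oth⟩
    -- the new difference / wedge-vee sets
    have hD' : {m | dl m ≠ dm' m} = D \ {i, j} := by
      ext x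
      rcases eq_or_ne x i with rfl | hxi
      · simp [hdm'i, hiB.1]
      rcases eq_or_ne x j with rfl | hxj
      · simp [hdm'j, hjA.1]
      · simp [hdm'oth x hxi hxj, hD, hxi, hxj]
    have hA' : {m | dl m = Lbl.wedge ∧ dm' m = Lbl.vee} = A \ {j} := by
      ext x
      rcases eq_or_ne x i with rfl | hxi
      · simp [hdm'i, hiB.1, hA, hij.ne]
      rcases eq_or_ne x j with rfl | hxj
      · simp [hdm'j]
      · simp [hdm'oth x hxi hxj, hA, hxj]
    have hB' : {m | dl m = Lbl.vee ∧ dm' m = Lbl.wedge} = Bs \ {i} := by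
      ext x
      rcases eq_or_ne x i with rfl | hxi
      · simp [hdm'i]
      rcases eq_or_ne x j with rfl | hxj
      · simp [hdm'j, hjA.1, hBs, hij.ne']
      · simp [hdm'oth x hxi hxj, hBs, hxi]
    have hDsub : D \ {i, j} ⊂ D := by
      constructor
      · exact Set.diff_subset
      · intro hsub
        have := hsub hjD
        simp at this
    have hlt : ({m | dl m ≠ dm' m}).ncard < n := by
      rw [hD', ← hn]
      exact Set.ncard_lt_ncard hDsub hfin
    have hrest : DiagLe dm' dl := by
      apply IH _ hlt dm' rfl
      · rw [hD']; exact hfin.subset Set.diff_subset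
      · intro m hm
        have hmD : m ∈ D \ {i, j} := hD' ▸ hm
        have h2 : dm' m = dm m := by
          simp only [Set.mem_diff, Set.mem_insert_iff, Set.mem_singleton_iff, not_or] at hmD
          exact hdm'oth m hmD.2.1 hmD.2.2
        rw [h2] at hm ⊢
        exact hAB m hm
      · rw [hA', hB', Set.ncard_diff_singleton_of_mem hjA,
          Set.ncard_diff_singleton_of_mem hiB, hcard]
      · intro k
        rw [hA', hB']
        by_cases hk : k ≤ i
        · have e1 : (Bs \ {i}) ∩ Set.Ici k = (Bs ∩ Set.Ici k) \ {i} := by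
            ext x; simp [Set.mem_diff]; tauto
          have e2 : (A \ {j}) ∩ Set.Ici k = (A ∩ Set.Ici k) \ {j} := by
            ext x; simp [Set.mem_diff]; tauto
          rw [e1, e2, Set.ncard_diff_singleton_of_mem (Set.mem_inter hiB (Set.mem_Ici.mpr hk)),
            Set.ncard_diff_singleton_of_mem (Set.mem_inter hjA (Set.mem_Ici.mpr (hk.trans hij.le)))]
          exact Nat.sub_le_sub_right (htail k) 1
        · have e1 : (Bs \ {i}) ∩ Set.Ici k = ∅ := by
            ext x
            simp only [Set.mem_inter_iff, Set.mem_diff, Set.mem_singleton_iff,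
              Set.mem_Ici, Set.mem_empty_iff_false, iff_false, not_and]
            rintro ⟨hxB, -⟩ hkx
            exact hk ((hkx.trans (himax x hxB)))
          rw [e1, Set.ncard_empty]
          exact Nat.zero_le _
    exact Relation.ReflTransGen.head hstep hrest

lemma nontriv_of_wedge {d : ℕ → Lbl} {x : ℕ} (h : d x = Lbl.wedge) : x ∈ NonTriv d := by
  simp [NonTriv, Triv, h]

lemma nontriv_of_vee {d : ℕ → Lbl} {x : ℕ} (h : d x = Lbl.vee) : x ∈ NonTriv d := by
  simp [NonTriv, Triv, h]

lemma lI_sets (dl dm : ℕ → Lbl) (h1 : ∀ n, Triv (dl n) → dm n = dl n)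
    (h2 : ∀ n, Triv (dm n) → dl n = dm n) {i : ℕ} (hi : i ∈ IB dl) :
    {j | i ≤ j ∧ dl j ≠ dm j ∧ j ∈ IB dl ∧ dl j = Lbl.wedge}
      = {n | dl n = Lbl.wedge ∧ dm n = Lbl.vee} ∩ Set.Ici i ∧
    {j | i ≤ j ∧ dl j ≠ dm j ∧ j ∈ IB dl ∧ dm j = Lbl.wedge}
      = {n | dl n = Lbl.vee ∧ dm n = Lbl.wedge} ∩ Set.Ici i := by
  have hm : sInf (NonTriv dl) < i :=
    lt_of_le_of_ne (Nat.sInf_le hi.1) (fun h => hi.2 h.symm)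
  constructor
  · ext j
    simp only [Set.mem_setOf_eq, Set.mem_inter_iff, Set.mem_Ici]
    constructor
    · rintro ⟨hij, hne, -, hw⟩
      rcases types h1 h2 j hne with h | h
      · exact ⟨h, hij⟩
      · rw [h.1] at hw; exact absurd hw (by simp)
    · rintro ⟨⟨hw, hv⟩, hij⟩
      refine ⟨hij, by rw [hw, hv]; simp, ⟨nontriv_of_wedge hw, ?_⟩, hw⟩
      exact fun h => absurd (h ▸ hij) (not_le.mpr hm)
  · ext j
    simp only [Set.mem_setOf_eq, Set.mem_inter_iff, Set.mem_Ici]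
    constructor
    · rintro ⟨hij, hne, -, hw⟩
      rcases types h1 h2 j hne with h | h
      · rw [h.2] at hw; exact absurd hw (by simp)
      · exact ⟨h, hij⟩
    · rintro ⟨⟨hv, hw⟩, hij⟩
      refine ⟨hij, by rw [hw, hv]; simp, ⟨nontriv_of_vee hv, ?_⟩, hw⟩
      exact fun h => absurd (h ▸ hij) (not_le.mpr hm)

end ProofAux

theorem lSum_finite_and_order_iff' (dl dm : ℕ → Lbl)
    (hbdd : ∃ N : ℕ, ∀ n, N ≤ n → dl n = Lbl.vee)
    (hblock : (∀ n, Triv (dl n) → dm n = dl n) ∧ (∀ n, Triv (dm n) → dl n = dm n) ∧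
      {n | dl n ≠ dm n}.Finite ∧
      {n | dl n = Lbl.wedge ∧ dm n = Lbl.vee}.ncard
        = {n | dl n = Lbl.vee ∧ dm n = Lbl.wedge}.ncard)
    (hne : (NonTriv dl).Nonempty) :
    {i ∈ IB dl | lI dl dm i ≠ 0}.Finite ∧
      (DiagLe dm dl ↔ ∀ i ∈ IB dl, 0 ≤ lI dl dm i) := by
  classical
  obtain ⟨h1, h2, hfinD, hcard⟩ := hblock
  obtain ⟨N, hN⟩ := hbdd
  set D := {n | dl n ≠ dm n} with hDdef
  set A := {n | dl n = Lbl.wedge ∧ dm n = Lbl.vee} with hAdef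
  set Bs := {n | dl n = Lbl.vee ∧ dm n = Lbl.wedge} with hBdef
  have hAD : A ⊆ D := fun x hx => by
    simp only [hAdef, Set.mem_setOf_eq] at hx
    simp only [hDdef, Set.mem_setOf_eq, hx.1, hx.2]; simp
  have hBD : Bs ⊆ D := fun x hx => by
    simp only [hBdef, Set.mem_setOf_eq] at hx
    simp only [hDdef, Set.mem_setOf_eq, hx.1, hx.2]; simp
  have hAfin : A.Finite := hfinD.subset hAD
  have hBfin : Bs.Finite := hfinD.subset hBD
  have hlI : ∀ i ∈ IB dl, lI dl dm i =
      ((A ∩ Set.Ici i).ncard : ℤ) - ((Bs ∩ Set.Ici i).ncard : ℤ) := by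
    intro i hi
    obtain ⟨e1, e2⟩ := ProofAux.lI_sets dl dm h1 h2 hi
    unfold lI
    rw [e1, e2]
  obtain ⟨M, hM⟩ := hfinD.bddAbove
  constructor
  · apply (Set.finite_Iic M).subset
    rintro i ⟨hiIB, hine⟩
    by_contra hMi
    rw [Set.mem_Iic, not_le] at hMi
    have eA : A ∩ Set.Ici i = ∅ := by
      ext x
      simp only [Set.mem_inter_iff, Set.mem_Ici, Set.mem_empty_iff_false, iff_false, not_and]
      intro hxA hix
      exact absurd ((hM (hAD hxA)).trans_lt hMi) (not_lt.mpr hix)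
    have eB : Bs ∩ Set.Ici i = ∅ := by
      ext x
      simp only [Set.mem_inter_iff, Set.mem_Ici, Set.mem_empty_iff_false, iff_false, not_and]
      intro hxB hix
      exact absurd ((hM (hBD hxB)).trans_lt hMi) (not_lt.mpr hix)
    apply hine
    rw [hlI i hiIB, eA, eB, Set.ncard_empty]
    simp
  set C := {n | dl n = Lbl.wedge ∧ dm n = Lbl.wedge} with hCdef
  have hWdl : ProofAux.Wd dl ⊆ Set.Iio N := by
    intro x hx
    simp only [Set.mem_Iio]
    by_contra hxN
    rw [not_lt] at hxN
    have := hN x hxN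
    rw [show dl x = Lbl.wedge from hx] at this
    exact absurd this (by simp)
  have hWdlfin : (ProofAux.Wd dl).Finite := (Set.finite_Iio N).subset hWdl
  have hCfin : C.Finite := hWdlfin.subset fun x hx => hx.1
  have hWdmfin : (ProofAux.Wd dm).Finite := by
    apply (hWdlfin.union hfinD).subset
    intro x hx
    rcases eq_or_ne (dl x) (dm x) with h | h
    · exact Or.inl (by rw [ProofAux.Wd, Set.mem_setOf_eq, h]; exact hx)
    · exact Or.inr h
  have hdecl : ∀ i, ProofAux.Wd dl ∩ Set.Ici i = (A ∩ Set.Ici i) ∪ (C ∩ Set.Ici i) := by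
    intro i
    ext x
    simp only [Set.mem_inter_iff, Set.mem_union, Set.mem_Ici, ProofAux.Wd,
      Set.mem_setOf_eq, hAdef, hCdef]
    constructor
    · rintro ⟨hw, hix⟩
      rcases eq_or_ne (dl x) (dm x) with h | h
      · exact Or.inr ⟨⟨hw, h ▸ hw⟩, hix⟩
      · rcases ProofAux.types h1 h2 x h with h' | h'
        · exact Or.inl ⟨h', hix⟩
        · rw [h'.1] at hw; exact absurd hw (by simp)
    · rintro (⟨⟨hw, -⟩, hix⟩ | ⟨⟨hw, -⟩, hix⟩) <;> exact ⟨hw, hix⟩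
  have hdecm : ∀ i, ProofAux.Wd dm ∩ Set.Ici i = (Bs ∩ Set.Ici i) ∪ (C ∩ Set.Ici i) := by
    intro i
    ext x
    simp only [Set.mem_inter_iff, Set.mem_union, Set.mem_Ici, ProofAux.Wd,
      Set.mem_setOf_eq, hBdef, hCdef]
    constructor
    · rintro ⟨hw, hix⟩
      rcases eq_or_ne (dl x) (dm x) with h | h
      · exact Or.inr ⟨⟨h.trans hw, hw⟩, hix⟩
      · rcases ProofAux.types h1 h2 x h with h' | h'
        · rw [h'.2] at hw; exact absurd hw (by simp)
        · exact Or.inl ⟨h', hix⟩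
    · rintro (⟨⟨-, hw⟩, hix⟩ | ⟨⟨-, hw⟩, hix⟩) <;> exact ⟨hw, hix⟩
  have hdisjA : ∀ i, Disjoint (A ∩ Set.Ici i) (C ∩ Set.Ici i) := by
    intro i
    rw [Set.disjoint_left]
    rintro x ⟨hxA, -⟩ ⟨hxC, -⟩
    exact absurd (hxA.2.symm.trans hxC.2) (by simp)
  have hdisjB : ∀ i, Disjoint (Bs ∩ Set.Ici i) (C ∩ Set.Ici i) := by
    intro i
    rw [Set.disjoint_left]
    rintro x ⟨hxB, -⟩ ⟨hxC, -⟩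
    exact absurd (hxB.1.symm.trans hxC.1) (by simp)
  constructor
  · -- forward
    intro h i hi
    obtain ⟨-, htails⟩ := ProofAux.diagle_tail h hWdmfin
    have := htails i
    rw [hdecl i, hdecm i,
      Set.ncard_union_eq (hdisjB i) (hBfin.inter_of_left _) (hCfin.inter_of_left _),
      Set.ncard_union_eq (hdisjA i) (hAfin.inter_of_left _) (hCfin.inter_of_left _)] at this
    rw [hlI i hi]
    omega
  · -- backward
    intro h
    apply ProofAux.back_main dl D.ncard dm rfl hfinD
      (fun m hm => ProofAux.types h1 h2 m hm) hcard
    intro k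
    have hSne : (NonTriv dl ∩ Set.Ici k).Nonempty := by
      refine ⟨max k N, ?_, Set.mem_Ici.mpr (le_max_left _ _)⟩
      exact ProofAux.nontriv_of_vee (hN _ (le_max_right _ _))
    set i := sInf (NonTriv dl ∩ Set.Ici k) with hidef
    have hiS : i ∈ NonTriv dl ∩ Set.Ici k := Nat.sInf_mem hSne
    have eA : A ∩ Set.Ici k = A ∩ Set.Ici i := by
      ext x
      simp only [Set.mem_inter_iff, Set.mem_Ici]
      refine ⟨fun ⟨hxA, hkx⟩ => ⟨hxA, Nat.sInf_le ⟨ProofAux.nontriv_of_wedge hxA.1, hkx⟩⟩,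
        fun ⟨hxA, hix⟩ => ⟨hxA, hiS.2.trans hix⟩⟩
    have eB : Bs ∩ Set.Ici k = Bs ∩ Set.Ici i := by
      ext x
      simp only [Set.mem_inter_iff, Set.mem_Ici]
      refine ⟨fun ⟨hxB, hkx⟩ => ⟨hxB, Nat.sInf_le ⟨ProofAux.nontriv_of_vee hxB.1, hkx⟩⟩,
        fun ⟨hxB, hix⟩ => ⟨hxB, hiS.2.trans hix⟩⟩
    rw [eA, eB]
    rcases eq_or_ne i (sInf (NonTriv dl)) with heq | hne'
    · have eA2 : A ∩ Set.Ici i = A := by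
        apply Set.inter_eq_self_of_subset_left
        intro x hx
        rw [Set.mem_Ici, heq]
        exact Nat.sInf_le (ProofAux.nontriv_of_wedge hx.1)
      have eB2 : Bs ∩ Set.Ici i = Bs := by
        apply Set.inter_eq_self_of_subset_left
        intro x hx
        rw [Set.mem_Ici, heq]
        exact Nat.sInf_le (ProofAux.nontriv_of_vee hx.1)
      rw [eA2, eB2]
      exact hcard.ge
    · have := h i ⟨hiS.1, hne'⟩
      rw [hlI i ⟨hiS.1, hne'⟩] at this
      omega


/-- The sum `l(λ,μ) = Σ_{i ∈ I(B)} l_i(λ,μ)` has only finitely many nonzero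
terms, and `λ ≥ μ` in the diagram order if and only if `l_i(λ,μ) ≥ 0` for all
`i ∈ I(B)`. -/
theorem lSum_finite_and_order_iff (dl dm : ℕ → Lbl)
    (hbdd : ∃ N : ℕ, ∀ n, N ≤ n → dl n = Lbl.vee)
    (hblock : (∀ n, Triv (dl n) → dm n = dl n) ∧ (∀ n, Triv (dm n) → dl n = dm n) ∧
      {n | dl n ≠ dm n}.Finite ∧
      {n | dl n = Lbl.wedge ∧ dm n = Lbl.vee}.ncard
        = {n | dl n = Lbl.vee ∧ dm n = Lbl.wedge}.ncard)
    (hne : (NonTriv dl).Nonempty) :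
    {i ∈ IB dl | lI dl dm i ≠ 0}.Finite ∧
      (DiagLe dm dl ↔ ∀ i ∈ IB dl, 0 ≤ lI dl dm i) :=
  lSum_finite_and_order_iff' dl dm hbdd hblock hne
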